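/- Let n ≥ 2 be an integer, and let a_+ denote the unique real root of t^{2n+2} + n·t^{2n+1} = 1 lying in (0,1) and a_- the unique real root lying in (−n−1, −n) (these exist for n ≥ 2). Then every complex root α of t^{2n+2} + n·t^{2n+1} = 1 with α ≠ a_- satisfies a_+ ≤ |α| ≤ 1. -/

import Mathlib

/-- Bound on difference of powers: `|x^k - y^k| ≤ k * c^(k-1) * |x - y|`. -/
lemma cabs_pow_sub_pow_le (x y : ℂ) (c : ℝ) (hc : 0 ≤ c)
    (hx : ‖x‖ ≤ c) (hy : ‖y‖ ≤ c) (k : ℕ) :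
    ‖(x ^ k - y ^ k)‖ ≤ (k : ℝ) * c ^ (k - 1) * ‖(x - y)‖ := by
  rw [← geom_sum₂_mul, norm_mul]
  have hsum : ‖(∑ i ∈ Finset.range k, x ^ i * y ^ (k - 1 - i))‖
      ≤ (k : ℝ) * c ^ (k - 1) := by
    calc ‖(∑ i ∈ Finset.range k, x ^ i * y ^ (k - 1 - i))‖
        ≤ ∑ i ∈ Finset.range k, ‖(x ^ i * y ^ (k - 1 - i))‖ :=
          norm_sum_le _ _
      _ ≤ ∑ i ∈ Finset.range k, c ^ (k - 1) := by
          apply Finset.sum_le_sum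
          intro i hi
          rw [norm_mul, norm_pow, norm_pow]
          have h1 : ‖x‖ ^ i ≤ c ^ i :=
            pow_le_pow_left₀ (norm_nonneg x) hx i
          have h2 : ‖y‖ ^ (k - 1 - i) ≤ c ^ (k - 1 - i) :=
            pow_le_pow_left₀ (norm_nonneg y) hy _
          have hi' : i < k := Finset.mem_range.mp hi
          calc ‖x‖ ^ i * ‖y‖ ^ (k - 1 - i)
              ≤ c ^ i * c ^ (k - 1 - i) :=
                mul_le_mul h1 h2 (pow_nonneg (norm_nonneg y) _)
                  (pow_nonneg hc i)
            _ = c ^ (i + (k - 1 - i)) := (pow_add c i _).symm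
            _ = c ^ (k - 1) := by congr 1; omega
      _ = (k : ℝ) * c ^ (k - 1) := by
          rw [Finset.sum_const, Finset.card_range, nsmul_eq_mul]
  exact mul_le_mul_of_nonneg_right hsum (norm_nonneg (x - y))

/-- Let `n ≥ 2`, let `a₊ ∈ (0,1)` and `a₋ ∈ (−n−1, −n)` be the real roots of
`t^(2n+2) + n·t^(2n+1) = 1`. Then every complex root `α ≠ a₋` satisfies `a₊ ≤ |α| ≤ 1`. -/
theorem stmt_4 (n : ℕ) (hn : 2 ≤ n)
    (ap : ℝ) (hap : ap ∈ Set.Ioo (0 : ℝ) 1)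
    (hapr : ap ^ (2 * n + 2) + (n : ℝ) * ap ^ (2 * n + 1) = 1)
    (am : ℝ) (ham : am ∈ Set.Ioo (-(n : ℝ) - 1) (-(n : ℝ)))
    (hamr : am ^ (2 * n + 2) + (n : ℝ) * am ^ (2 * n + 1) = 1) :
    ∀ α : ℂ, α ^ (2 * n + 2) + (n : ℂ) * α ^ (2 * n + 1) = 1 → α ≠ (am : ℂ) →
      ap ≤ ‖α‖ ∧ ‖α‖ ≤ 1 := by
  intro α hroot hα
  obtain ⟨hap0, hap1⟩ := hap
  obtain ⟨ham1, ham2⟩ := ham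
  have hn2 : (2 : ℝ) ≤ (n : ℝ) := by exact_mod_cast hn
  set r := ‖α‖ with hr
  have hr0 : 0 ≤ r := norm_nonneg α
  -- the triangle inequality gives `1 ≤ r^(2n+2) + n r^(2n+1)`
  have htri : (1 : ℝ) ≤ r ^ (2 * n + 2) + (n : ℝ) * r ^ (2 * n + 1) := by
    have h1 : ‖(α ^ (2 * n + 2) + (n : ℂ) * α ^ (2 * n + 1))‖ = 1 := by
      rw [hroot]; simp
    calc (1 : ℝ) = ‖(α ^ (2 * n + 2) + (n : ℂ) * α ^ (2 * n + 1))‖ := h1.symm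
      _ ≤ ‖(α ^ (2 * n + 2))‖ + ‖((n : ℂ) * α ^ (2 * n + 1))‖ :=
          norm_add_le _ _
      _ = r ^ (2 * n + 2) + (n : ℝ) * r ^ (2 * n + 1) := by
          rw [norm_mul, norm_pow, norm_pow, Complex.norm_natCast]
  -- lower bound
  have hlow : ap ≤ r := by
    by_contra hcon
    push_neg at hcon
    have h1 : r ^ (2 * n + 2) < ap ^ (2 * n + 2) := pow_lt_pow_left₀ hcon hr0 (by omega)
    have h2 : r ^ (2 * n + 1) < ap ^ (2 * n + 1) := pow_lt_pow_left₀ hcon hr0 (by omega)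
    nlinarith [hapr, htri]
  refine ⟨hlow, ?_⟩
  -- upper bound
  by_contra hcon
  push_neg at hcon
  -- so r > 1; pass to reciprocals
  have hα0 : α ≠ 0 := by
    intro h; rw [h] at hroot; simp at hroot
  have ham0 : am < 0 := by nlinarith
  have hamne : (am : ℂ) ≠ 0 := by
    simp only [ne_eq, Complex.ofReal_eq_zero]; linarith
  set β : ℂ := α⁻¹ with hβ
  set bm : ℂ := ((am : ℂ))⁻¹ with hbm
  have hinvα : β * α = 1 := inv_mul_cancel₀ hα0
  have hinvm : bm * (am : ℂ) = 1 := inv_mul_cancel₀ hamne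
  have hpow1 : β ^ (2 * n + 2) * α ^ (2 * n + 2) = 1 := by
    rw [← mul_pow, hinvα, one_pow]
  have hpow2 : β ^ (2 * n + 2) * α ^ (2 * n + 1) = β := by
    have h : β ^ (2 * n + 1) * α ^ (2 * n + 1) = 1 := by
      rw [← mul_pow, hinvα, one_pow]
    calc β ^ (2 * n + 2) * α ^ (2 * n + 1)
        = β * (β ^ (2 * n + 1) * α ^ (2 * n + 1)) := by ring
      _ = β := by rw [h, mul_one]
  have hβeq : β ^ (2 * n + 2) = (n : ℂ) * β + 1 := by
    linear_combination (-(β ^ (2 * n + 2))) * hroot + hpow1 + (n : ℂ) * hpow2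
  have hamC : (am : ℂ) ^ (2 * n + 2) + (n : ℂ) * (am : ℂ) ^ (2 * n + 1) = 1 := by
    exact_mod_cast congrArg (Complex.ofReal) hamr
  have hpow1' : bm ^ (2 * n + 2) * (am : ℂ) ^ (2 * n + 2) = 1 := by
    rw [← mul_pow, hinvm, one_pow]
  have hpow2' : bm ^ (2 * n + 2) * (am : ℂ) ^ (2 * n + 1) = bm := by
    have h : bm ^ (2 * n + 1) * (am : ℂ) ^ (2 * n + 1) = 1 := by
      rw [← mul_pow, hinvm, one_pow]
    calc bm ^ (2 * n + 2) * (am : ℂ) ^ (2 * n + 1)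
        = bm * (bm ^ (2 * n + 1) * (am : ℂ) ^ (2 * n + 1)) := by ring
      _ = bm := by rw [h, mul_one]
  have hbmeq : bm ^ (2 * n + 2) = (n : ℂ) * bm + 1 := by
    linear_combination (-(bm ^ (2 * n + 2))) * hamC + hpow1' + (n : ℂ) * hpow2'
  set m := ‖β‖ with hm
  have hm0 : 0 ≤ m := norm_nonneg β
  have hmr : m = r⁻¹ := by rw [hm, hβ, norm_inv]
  have hm1 : m < 1 := by
    rw [hmr]
    exact inv_lt_one_of_one_lt₀ hcon
  -- Step A: m ≤ 0.51
  have hnm : (n : ℝ) * m ≤ m ^ (2 * n + 2) + 1 := by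
    have hb : (n : ℂ) * β = β ^ (2 * n + 2) + (-1 : ℂ) := by rw [hβeq]; ring
    calc (n : ℝ) * m = ‖((n : ℂ) * β)‖ := by
          rw [norm_mul, Complex.norm_natCast, hm]
      _ = ‖(β ^ (2 * n + 2) + (-1 : ℂ))‖ := by rw [hb]
      _ ≤ ‖(β ^ (2 * n + 2))‖ + ‖(-1 : ℂ)‖ :=
          norm_add_le _ _
      _ = m ^ (2 * n + 2) + 1 := by rw [norm_pow, hm]; simp
  have hpow6 : m ^ (2 * n + 2) ≤ m ^ 6 :=
    pow_le_pow_of_le_one hm0 hm1.le (by omega)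
  have hmc : m ≤ 51 / 100 := by
    by_contra hmc
    push_neg at hmc
    have h2m : 2 * m ≤ m ^ 6 + 1 := by nlinarith
    have hqpos : m ^ 5 + m ^ 4 + m ^ 3 + m ^ 2 + m - 1 > 0 := by
      have e2 : ((51:ℝ)/100) ^ 2 < m ^ 2 := pow_lt_pow_left₀ hmc (by norm_num) (by norm_num)
      have e3 : ((51:ℝ)/100) ^ 3 < m ^ 3 := pow_lt_pow_left₀ hmc (by norm_num) (by norm_num)
      have e4 : ((51:ℝ)/100) ^ 4 < m ^ 4 := pow_lt_pow_left₀ hmc (by norm_num) (by norm_num)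
      have e5 : ((51:ℝ)/100) ^ 5 < m ^ 5 := pow_lt_pow_left₀ hmc (by norm_num) (by norm_num)
      have c2 : ((51:ℝ)/100) ^ 2 = 2601/10000 := by norm_num
      have c3 : ((51:ℝ)/100) ^ 3 = 132651/1000000 := by norm_num
      have c4 : ((51:ℝ)/100) ^ 4 = 6765201/100000000 := by norm_num
      have c5 : ((51:ℝ)/100) ^ 5 = 345025251/10000000000 := by norm_num
      linarith
    have hqid : (1 - m) * (m ^ 5 + m ^ 4 + m ^ 3 + m ^ 2 + m - 1) = 2 * m - m ^ 6 - 1 := by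
      ring
    have hprod : 0 < (1 - m) * (m ^ 5 + m ^ 4 + m ^ 3 + m ^ 2 + m - 1) :=
      mul_pos (by linarith) hqpos
    rw [hqid] at hprod
    linarith
  -- |bm| ≤ 51/100
  have habsam : (2 : ℝ) ≤ ‖(am : ℂ)‖ := by
    rw [Complex.norm_real, Real.norm_eq_abs, abs_of_neg ham0]
    linarith
  have hbmabs : ‖bm‖ ≤ 51 / 100 := by
    rw [hbm, norm_inv]
    have h2 : (0:ℝ) < ‖(am : ℂ)‖ := by linarith
    have := inv_anti₀ (by norm_num : (0:ℝ) < 2) habsam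
    norm_num at this ⊢
    linarith
  -- Step B: contraction
  have hdiff : β ^ (2 * n + 2) - bm ^ (2 * n + 2) = (n : ℂ) * (β - bm) := by
    rw [hβeq, hbmeq]; ring
  set d := ‖(β - bm)‖ with hd
  have hd0 : 0 ≤ d := norm_nonneg _
  have hkey : (n : ℝ) * d ≤ (2 * (n:ℝ) + 2) * (51/100 : ℝ) ^ (2 * n + 1) * d := by
    have h1 : ‖(β ^ (2*n+2) - bm ^ (2*n+2))‖ = (n : ℝ) * d := by
      rw [hdiff, norm_mul, Complex.norm_natCast]
    have h2 := cabs_pow_sub_pow_le β bm (51/100) (by norm_num) hmc hbmabs (2*n+2)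
    rw [h1] at h2
    have he : ((2*n+2 : ℕ) : ℝ) = (2 * (n:ℝ) + 2) := by push_cast; ring
    have he2 : (2*n+2) - 1 = 2*n+1 := by omega
    rw [he, he2] at h2
    exact h2
  have hcontr : (2 * (n:ℝ) + 2) * (51/100 : ℝ) ^ (2 * n + 1) < (n : ℝ) := by
    have h5 : ((51:ℝ)/100) ^ (2*n+1) ≤ ((51:ℝ)/100) ^ 5 :=
      pow_le_pow_of_le_one (by norm_num) (by norm_num) (by omega)
    have h3 : (2 * (n:ℝ) + 2) ≤ 3 * (n : ℝ) := by linarith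
    have hp5 : ((51:ℝ)/100) ^ 5 = 345025251 / 10000000000 := by norm_num
    have hpos : (0:ℝ) ≤ ((51:ℝ)/100) ^ (2*n+1) := pow_nonneg (by norm_num) _
    nlinarith
  have hd' : d = 0 := by
    by_contra hdz
    have hdpos : 0 < d := lt_of_le_of_ne hd0 (Ne.symm hdz)
    have hlt : (2 * (n:ℝ) + 2) * (51/100 : ℝ) ^ (2 * n + 1) * d < (n : ℝ) * d :=
      mul_lt_mul_of_pos_right hcontr hdpos
    linarith
  have hβbm : β = bm := by
    have h0 := norm_eq_zero.mp hd'
    exact sub_eq_zero.mp h0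
  have : α = (am : ℂ) := by
    have h := congrArg (·⁻¹) hβbm
    simpa [hβ, hbm, inv_inv] using h
  exact hα this
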